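/- arXiv:2501.14874 — 2 statements merged into one kernel-verified Lean document; each statement's English description precedes it below -/
import Mathlib

section
/- Let $\{Z_n\}_n$ be a sequence of complex matrices with $Z_n \in \mathbb{C}^{sn\times tn}$, and fix $p \ge 1$. If the $p$-th power of the Schatten $p$-norm satisfies $\|Z_n\|_p^p = o(n)$ as $n \to \infty$, then $\{Z_n\}_n$ is zero-distributed in the sense of singular values. -/
open Filter Finset Matrix Topology MeasureTheory

/-- The (unsorted) singular values of a complex matrix: square roots of the
eigenvalues of `Aᴴ * A`. -/
noncomputable def svals {m n : Type*} [Fintype m] [Fintype n] [DecidableEq n]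
    (A : Matrix m n ℂ) (i : n) : ℝ :=
  Real.sqrt ((Matrix.isHermitian_conjTranspose_mul_self A).eigenvalues i)

/-- Singular values of a `Fin p × Fin q`-indexed complex matrix, arranged in
non-increasing order and indexed by `ℕ` (zero for indices `≥ q`); so
`svalFun A 0` is the largest singular value `σ₁(A)`. -/
noncomputable def svalFun {p q : ℕ} (A : Matrix (Fin p) (Fin q) ℂ) (j : ℕ) : ℝ :=
  if h : j < q then svals A (Tuple.sort (svals A) ((⟨j, h⟩ : Fin q).rev)) else 0

/-- The spectral norm of a complex matrix: its largest singular value. -/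
noncomputable def specNorm {m n : Type*} [Fintype m] [Fintype n] [DecidableEq n]
    (A : Matrix m n ℂ) : ℝ :=
  ⨆ i, svals A i

lemma svalFun_nonneg {a b : ℕ} (A : Matrix (Fin a) (Fin b) ℂ) (j : ℕ) :
    0 ≤ svalFun A j := by
  unfold svalFun
  split
  · exact Real.sqrt_nonneg _
  · exact le_rfl

lemma sum_svalFun_rpow_le {a b : ℕ} (A : Matrix (Fin a) (Fin b) ℂ) (p : ℝ)
    (N : ℕ) (hN : N ≤ b) :
    ∑ j ∈ Finset.range N, svalFun A j ^ p ≤ ∑ i : Fin b, svals A i ^ p := by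
  have h1 : ∑ j ∈ Finset.range N, svalFun A j ^ p
      ≤ ∑ j ∈ Finset.range b, svalFun A j ^ p :=
    Finset.sum_le_sum_of_subset_of_nonneg (Finset.range_subset_range.2 hN)
      (fun j _ _ => Real.rpow_nonneg (svalFun_nonneg A j) p)
  refine h1.trans_eq ?_
  rw [Finset.sum_range (fun j => svalFun A j ^ p)]
  have h2 : ∀ i : Fin b, svalFun A (i : ℕ) ^ p
      = svals A ((Fin.revPerm.trans (Tuple.sort (svals A))) i) ^ p := by
    intro i
    simp only [svalFun, i.isLt, dif_pos, Fin.eta, Equiv.trans_apply, Fin.revPerm_apply]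
  rw [Finset.sum_congr rfl (fun i _ => h2 i)]
  exact Equiv.sum_comp (Fin.revPerm.trans (Tuple.sort (svals A))) (fun i => svals A i ^ p)

/-- if the `p`-th power of the Schatten `p`-norm of `Zₙ` is `o(n)`,
then `{Zₙ}ₙ` is zero-distributed in the sense of the singular values. -/
theorem zero_distributed_of_schatten_small (s t : ℕ) (hs : 0 < s) (ht : 0 < t)
    (p : ℝ) (hp : 1 ≤ p)
    (Z : (n : ℕ) → Matrix (Fin (s * n)) (Fin (t * n)) ℂ)
    (hSch : Tendsto (fun n => (∑ i : Fin (t * n), svals (Z n) i ^ p) / n) atTop (nhds 0)) :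
    ∀ F : ℝ → ℂ, Continuous F → HasCompactSupport F →
      Tendsto (fun n => (1 / ((min s t * n : ℕ) : ℝ)) •
          ∑ j ∈ Finset.range (min s t * n), F (svalFun (Z n) j))
        atTop (nhds (F 0)) := by
  intro F hF hFc
  obtain ⟨C, hC⟩ := hFc.exists_bound_of_continuous hF
  have hC0 : 0 ≤ C := le_trans (norm_nonneg _) (hC 0)
  have hr : 0 < min s t := lt_min hs ht
  have hrt : min s t ≤ t := min_le_right s t
  rw [Metric.tendsto_atTop]
  intro ε hε
  obtain ⟨δ, hδ0, hδ⟩ := Metric.continuousAt_iff.mp hF.continuousAt (ε / 2) (by positivity)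
  have hδp : 0 < δ ^ p := Real.rpow_pos_of_pos hδ0 p
  have hev : ∀ᶠ n in atTop,
      (∑ i : Fin (t * n), svals (Z n) i ^ p) / n < ε * δ ^ p / (4 * C + 2) ∧ 1 ≤ n := by
    refine (hSch.eventually_lt_const (by positivity)).and (eventually_ge_atTop 1)
  obtain ⟨N0, hN0⟩ := eventually_atTop.mp hev
  refine ⟨N0, fun n hn => ?_⟩
  obtain ⟨hSn, hn1⟩ := hN0 n hn
  set N := min s t * n with hNdef
  have hNpos : 0 < N := Nat.mul_pos hr (lt_of_lt_of_le one_pos hn1)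
  have hNR : (0 : ℝ) < N := Nat.cast_pos.2 hNpos
  set S := ∑ i : Fin (t * n), svals (Z n) i ^ p with hSdef
  have hS0 : 0 ≤ S := Finset.sum_nonneg fun i _ =>
    Real.rpow_nonneg (Real.sqrt_nonneg _) p
  -- rewrite the difference
  have hsum : ∀ j, (0:ℝ) ≤ svalFun (Z n) j := svalFun_nonneg (Z n)
  have key : (1 / (N : ℝ)) • (∑ j ∈ Finset.range N, F (svalFun (Z n) j)) - F 0
      = (1 / (N : ℝ)) • ∑ j ∈ Finset.range N, (F (svalFun (Z n) j) - F 0) := by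
    rw [Finset.sum_sub_distrib, Finset.sum_const, Finset.card_range, smul_sub]
    congr 1
    rw [← Nat.cast_smul_eq_nsmul ℝ N (F 0), smul_smul, one_div,
      inv_mul_cancel₀ (ne_of_gt hNR), one_smul]
  rw [dist_eq_norm, key, norm_smul, Real.norm_eq_abs, abs_of_pos (by positivity)]
  -- split the sum
  classical
  set filt := (Finset.range N).filter (fun j => δ ≤ svalFun (Z n) j) with hfilt
  -- cardinality bound
  have hcard : (filt.card : ℝ) * δ ^ p ≤ S := by
    have h1 : (filt.card : ℝ) * δ ^ p ≤ ∑ j ∈ filt, svalFun (Z n) j ^ p := by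
      calc (filt.card : ℝ) * δ ^ p = ∑ _j ∈ filt, δ ^ p := by
            rw [Finset.sum_const, nsmul_eq_mul]
        _ ≤ ∑ j ∈ filt, svalFun (Z n) j ^ p := Finset.sum_le_sum fun j hj =>
            Real.rpow_le_rpow hδ0.le (Finset.mem_filter.mp hj).2 (le_trans zero_le_one hp)
    have h2 : ∑ j ∈ filt, svalFun (Z n) j ^ p ≤ ∑ j ∈ Finset.range N, svalFun (Z n) j ^ p :=
      Finset.sum_le_sum_of_subset_of_nonneg (Finset.filter_subset _ _)
        (fun j _ _ => Real.rpow_nonneg (hsum j) p)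
    exact h1.trans (h2.trans (sum_svalFun_rpow_le (Z n) p N (Nat.mul_le_mul_right n hrt)))
  -- norm of sum bound
  have hnormsum : ‖∑ j ∈ Finset.range N, (F (svalFun (Z n) j) - F 0)‖
      ≤ (filt.card : ℝ) * (2 * C) + (N : ℝ) * (ε / 2) := by
    refine (norm_sum_le _ _).trans ?_
    rw [← Finset.sum_filter_add_sum_filter_not (Finset.range N)
      (fun j => δ ≤ svalFun (Z n) j)]
    have hb1 : ∑ j ∈ filt, ‖F (svalFun (Z n) j) - F 0‖ ≤ (filt.card : ℝ) * (2 * C) := by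
      rw [← nsmul_eq_mul]
      refine Finset.sum_le_card_nsmul _ _ _ fun j _ => ?_
      calc ‖F (svalFun (Z n) j) - F 0‖ ≤ ‖F (svalFun (Z n) j)‖ + ‖F 0‖ := norm_sub_le _ _
        _ ≤ C + C := add_le_add (hC _) (hC _)
        _ = 2 * C := by ring
    have hb2 : ∑ j ∈ (Finset.range N).filter (fun j => ¬ δ ≤ svalFun (Z n) j),
        ‖F (svalFun (Z n) j) - F 0‖ ≤ (N:ℝ) * (ε / 2) := by
      have := Finset.sum_le_card_nsmul
        ((Finset.range N).filter (fun j => ¬ δ ≤ svalFun (Z n) j))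
        (fun j => ‖F (svalFun (Z n) j) - F 0‖) (ε / 2) ?_
      · refine this.trans ?_
        rw [nsmul_eq_mul]
        refine mul_le_mul_of_nonneg_right ?_ (by positivity)
        exact_mod_cast Nat.cast_le.2 ((Finset.card_filter_le _ _).trans (Finset.card_range N).le)
      · intro j hj
        have hjlt : svalFun (Z n) j < δ := not_le.mp (Finset.mem_filter.mp hj).2
        have : dist (F (svalFun (Z n) j)) (F 0) < ε / 2 := by
          refine hδ ?_
          rw [Real.dist_eq, sub_zero, abs_of_nonneg (hsum j)]
          exact hjlt
        rw [dist_eq_norm] at this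
        exact this.le
    exact add_le_add hb1 hb2
  -- put it together
  have hfc : (filt.card : ℝ) ≤ S / δ ^ p := (le_div_iff₀ hδp).2 hcard
  have main : (1 / (N:ℝ)) * ‖∑ j ∈ Finset.range N, (F (svalFun (Z n) j) - F 0)‖
      ≤ (2 * C / δ ^ p) * (S / n) + ε / 2 := by
    have h1 : (1 / (N:ℝ)) * ‖∑ j ∈ Finset.range N, (F (svalFun (Z n) j) - F 0)‖
        ≤ (1 / (N:ℝ)) * ((S / δ ^ p) * (2 * C) + (N : ℝ) * (ε / 2)) := by
      refine mul_le_mul_of_nonneg_left (hnormsum.trans ?_) (by positivity)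
      exact add_le_add_left (mul_le_mul_of_nonneg_right hfc (by positivity)) _
    refine h1.trans ?_
    rw [mul_add]
    have h2 : (1 / (N:ℝ)) * ((N:ℝ) * (ε / 2)) = ε / 2 := by
      field_simp
    rw [h2]
    refine add_le_add_left ?_ _
    have hnN : (n : ℝ) ≤ (N : ℝ) := by
      exact_mod_cast Nat.le_mul_of_pos_left n hr
    have hn0 : (0:ℝ) < n := by exact_mod_cast lt_of_lt_of_le one_pos hn1
    calc (1 / (N:ℝ)) * ((S / δ ^ p) * (2 * C))
        = (2 * C / δ ^ p) * (S / N) := by ring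
      _ ≤ (2 * C / δ ^ p) * (S / n) := by
          refine mul_le_mul_of_nonneg_left ?_ (by positivity)
          exact div_le_div_of_nonneg_left hS0 hn0 hnN |>.trans_eq rfl
      _ ≤ (2 * C / δ ^ p) * (S / n) := le_rfl
  refine lt_of_le_of_lt main ?_
  have hterm : (2 * C / δ ^ p) * (S / n) ≤ 2 * C / δ ^ p * (ε * δ ^ p / (4 * C + 2)) := by
    exact mul_le_mul_of_nonneg_left hSn.le (by positivity)
  have hfin : 2 * C / δ ^ p * (ε * δ ^ p / (4 * C + 2)) < ε / 2 := by
    have heq : 2 * C / δ ^ p * (ε * δ ^ p / (4 * C + 2)) = ε * (2 * C / (4 * C + 2)) := by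
      field_simp
    rw [heq]
    have h2C : 2 * C / (4 * C + 2) < 1 / 2 := by
      rw [div_lt_div_iff₀ (by positivity) (by norm_num)]
      nlinarith
    calc ε * (2 * C / (4 * C + 2)) < ε * (1 / 2) := by
          exact mul_lt_mul_of_pos_left h2C hε
      _ = ε / 2 := by ring
  linarith
end

section
/- Let $\{A_n\}_n$ be a sequence of Hermitian matrices and $\{S_n\}_n$ a sequence of Hermitian positive definite matrices of the same sizes $d_n$ with uniformly bounded $\|A_n\|, \|S_n\|, \|S_n^{-1}\|$, and suppose $\{S_n - A_n\}_n$ is zero-distributed. Then the eigenvalues of $S_n^{-1}A_n$ are real and weakly clustered at $1$: for every $\epsilon>0$, $\#\{j : |\lambda_j(S_n^{-1}A_n) - 1| > \epsilon\} = o(d_n)$. -/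
open Filter Finset Matrix Topology MeasureTheory
open scoped ComplexOrder

section Aux
open scoped Matrix.Norms.L2Operator
variable {n : Type*} [Fintype n] [DecidableEq n]


noncomputable def fro2 {m n : Type*} [Fintype m] [Fintype n] (X : Matrix m n ℂ) : ℝ :=
  ∑ j, ∑ i, ‖X i j‖ ^ 2

lemma fro2_nonneg {m n : Type*} [Fintype m] [Fintype n] (X : Matrix m n ℂ) : 0 ≤ fro2 X := by
  refine Finset.sum_nonneg fun j _ => Finset.sum_nonneg fun i _ => by positivity

lemma fro2_neg {m n : Type*} [Fintype m] [Fintype n] (X : Matrix m n ℂ) : fro2 (-X) = fro2 X := by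
  simp [fro2]

lemma fro2_conjTranspose {m n : Type*} [Fintype m] [Fintype n] (X : Matrix m n ℂ) :
    fro2 Xᴴ = fro2 X := by
  rw [fro2, Finset.sum_comm]
  simp [fro2, conjTranspose_apply]

lemma norm_col_eq {m n : Type*} [Fintype m] [Fintype n] (X : Matrix m n ℂ) (j : n) :
    ‖(EuclideanSpace.equiv m ℂ).symm (fun i => X i j)‖ ^ 2 = ∑ i, ‖X i j‖ ^ 2 := by
  rw [EuclideanSpace.norm_eq, Real.sq_sqrt (by positivity)]
  rfl

lemma fro2_mul_le {m n l : Type*} [Fintype m] [Fintype n] [Fintype l] [DecidableEq n]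
    (P : Matrix m n ℂ) (X : Matrix n l ℂ) :
    fro2 (P * X) ≤ ‖P‖ ^ 2 * fro2 X := by
  rw [fro2, fro2, Finset.mul_sum]
  refine Finset.sum_le_sum fun j _ => ?_
  have h1 : (fun i => (P * X) i j) = P *ᵥ (fun k => X k j) := by
    ext i; simp [Matrix.mul_apply, Matrix.mulVec, dotProduct]
  have h2 := P.l2_opNorm_mulVec ((EuclideanSpace.equiv n ℂ).symm (fun k => X k j))
  have h3 : ‖(EuclideanSpace.equiv m ℂ).symm (fun i => (P * X) i j)‖ ≤
      ‖P‖ * ‖(EuclideanSpace.equiv n ℂ).symm (fun k => X k j)‖ := by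
    rw [h1]; exact h2
  have h4 := norm_col_eq (P * X) j
  have h5 := norm_col_eq X j
  nlinarith [norm_nonneg ((EuclideanSpace.equiv m ℂ).symm (fun i => (P * X) i j)),
    norm_nonneg ((EuclideanSpace.equiv n ℂ).symm (fun k => X k j)), norm_nonneg P]

lemma fro2_mul_right_le {m n l : Type*} [Fintype m] [Fintype n] [Fintype l]
    [DecidableEq n] [DecidableEq m] [DecidableEq l]
    (X : Matrix m n ℂ) (P : Matrix n l ℂ) :
    fro2 (X * P) ≤ fro2 X * ‖P‖ ^ 2 := by
  have := fro2_mul_le Pᴴ Xᴴ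
  rw [← Matrix.conjTranspose_mul, fro2_conjTranspose, fro2_conjTranspose,
    Matrix.l2_opNorm_conjTranspose] at this
  linarith

lemma norm_one_le' : ‖(1 : Matrix n n ℂ)‖ ≤ 1 := by
  rw [Matrix.cstar_norm_def, _root_.map_one]
  exact ContinuousLinearMap.norm_id_le

lemma norm_unitary_le {U : Matrix n n ℂ} (hU : U ∈ Matrix.unitaryGroup n ℂ) : ‖U‖ ≤ 1 := by
  have h1 : Uᴴ * U = 1 := (Matrix.mem_unitaryGroup_iff').mp hU
  have h2 := Matrix.l2_opNorm_conjTranspose_mul_self U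
  rw [h1] at h2
  have := norm_one_le' (n := n)
  nlinarith [norm_nonneg U]

lemma norm_diagonal_le (v : n → ℂ) (c : ℝ) (hc : 0 ≤ c) (h : ∀ i, ‖v i‖ ≤ c) :
    ‖diagonal v‖ ≤ c := by
  rw [Matrix.cstar_norm_def]
  refine ContinuousLinearMap.opNorm_le_bound _ hc fun x => ?_
  have hx : ∀ i, (Matrix.toEuclideanCLM (n := n) (𝕜 := ℂ) (diagonal v) x) i = v i * x i := by
    intro i
    have := Matrix.ofLp_toEuclideanCLM (n := n) (𝕜 := ℂ) (diagonal v) x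
    calc (Matrix.toEuclideanCLM (n := n) (𝕜 := ℂ) (diagonal v) x) i
        = (WithLp.equiv _ _ ((Matrix.toEuclideanCLM (n := n) (𝕜 := ℂ) (diagonal v)) x)) i := rfl
      _ = v i * x i := by rw [WithLp.equiv_apply, this]; simp [Matrix.toLin'_apply, Matrix.mulVec_diagonal]
  rw [EuclideanSpace.norm_eq, EuclideanSpace.norm_eq]
  have key : ∑ i, ‖(Matrix.toEuclideanCLM (n := n) (𝕜 := ℂ) (diagonal v) x) i‖ ^ 2
      ≤ c ^ 2 * ∑ i, ‖x i‖ ^ 2 := by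
    rw [Finset.mul_sum]
    refine Finset.sum_le_sum fun i _ => ?_
    rw [hx i, norm_mul, mul_pow]
    have h2 : ‖v i‖ ^ 2 ≤ c ^ 2 := by nlinarith [norm_nonneg (v i), h i]
    exact mul_le_mul_of_nonneg_right h2 (sq_nonneg _)
  calc Real.sqrt (∑ i, ‖(Matrix.toEuclideanCLM (n := n) (𝕜 := ℂ) (diagonal v) x) i‖ ^ 2)
      ≤ Real.sqrt (c ^ 2 * ∑ i, ‖x i‖ ^ 2) := Real.sqrt_le_sqrt key
    _ = c * Real.sqrt (∑ i, ‖x i‖ ^ 2) := by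
        rw [Real.sqrt_mul (by positivity), Real.sqrt_sq hc]

open Polynomial in
lemma charpoly_diag' (v : n → ℂ) :
    (Matrix.diagonal v).charpoly = ∏ i, (X - C (v i)) := by
  rw [Matrix.charpoly]
  have h : charmatrix (Matrix.diagonal v) = Matrix.diagonal (fun i => (X : ℂ[X]) - C (v i)) := by
    refine Matrix.ext fun i j => ?_
    by_cases hij : i = j
    · subst hij; rw [charmatrix_apply_eq, Matrix.diagonal_apply_eq, Matrix.diagonal_apply_eq]
    · rw [charmatrix_apply_ne _ _ _ hij, Matrix.diagonal_apply_ne _ hij,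
        Matrix.diagonal_apply_ne _ hij]
      simp
  rw [h, Matrix.det_diagonal]

open Polynomial in
lemma charmatrix_eq (M : Matrix n n ℂ) :
    charmatrix M = Matrix.diagonal (fun _ => (X : ℂ[X])) - M.map C := by
  ext i j
  rw [charmatrix_apply]
  simp [Matrix.map_apply]

lemma charpoly_conj' (P M : Matrix n n ℂ) (hP : IsUnit P.det) :
    (P * M * P⁻¹).charpoly = M.charpoly := by
  classical
  have hPP : P * P⁻¹ = 1 := Matrix.mul_nonsing_inv P hP
  have hmapPP : P.map Polynomial.C * (P⁻¹).map Polynomial.C = 1 := by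
    rw [← Matrix.map_mul, hPP]
    exact Matrix.map_one _ (map_zero _) (map_one _)
  have key : charmatrix (P * M * P⁻¹) =
      P.map Polynomial.C * charmatrix M * (P⁻¹).map Polynomial.C := by
    rw [charmatrix_eq, charmatrix_eq, Matrix.mul_sub, Matrix.sub_mul]
    congr 1
    · rw [← Matrix.smul_one_eq_diagonal, Matrix.mul_smul, Matrix.smul_mul, Matrix.mul_one,
        hmapPP]
    · rw [← Matrix.map_mul, ← Matrix.map_mul]
  rw [Matrix.charpoly, Matrix.charpoly, key, Matrix.det_mul, Matrix.det_mul]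
  have : (P.map Polynomial.C).det * (P⁻¹.map Polynomial.C).det = 1 := by
    rw [← Matrix.det_mul, hmapPP, Matrix.det_one]
  calc (P.map Polynomial.C).det * (charmatrix M).det * (P⁻¹.map Polynomial.C).det
      = (charmatrix M).det * ((P.map Polynomial.C).det * (P⁻¹.map Polynomial.C).det) := by ring
    _ = (charmatrix M).det := by rw [this, mul_one]

lemma trace_conj_unitary (U : Matrix.unitaryGroup n ℂ) (v : n → ℂ) :
    Matrix.trace ((U : Matrix n n ℂ) * Matrix.diagonal v * star (U : Matrix n n ℂ)) = ∑ i, v i := by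
  have hUU : star (U : Matrix n n ℂ) * (U : Matrix n n ℂ) = 1 :=
    (Matrix.mem_unitaryGroup_iff').mp U.2
  rw [Matrix.trace_mul_comm, ← Matrix.mul_assoc, hUU, Matrix.one_mul, Matrix.trace_diagonal]

lemma spectral_c {P : Matrix n n ℂ} (hP : P.IsHermitian) :
    P = (hP.eigenvectorUnitary : Matrix n n ℂ) *
        Matrix.diagonal (fun i => (hP.eigenvalues i : ℂ)) *
        star (hP.eigenvectorUnitary : Matrix n n ℂ) := by
  conv_lhs => rw [hP.spectral_theorem]
  rfl

lemma trace_herm {P : Matrix n n ℂ} (hP : P.IsHermitian) :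
    Matrix.trace P = ((∑ i, hP.eigenvalues i : ℝ) : ℂ) := by
  conv_lhs => rw [spectral_c hP]
  rw [trace_conj_unitary]
  push_cast
  rfl

lemma conj_unitary_sq {P : Matrix n n ℂ} (hP : P.IsHermitian) :
    P * P = (hP.eigenvectorUnitary : Matrix n n ℂ) *
        Matrix.diagonal (fun i => (hP.eigenvalues i : ℂ) * (hP.eigenvalues i : ℂ)) *
        star (hP.eigenvectorUnitary : Matrix n n ℂ) := by
  set U : Matrix n n ℂ := (hP.eigenvectorUnitary : Matrix n n ℂ)
  have hUU : star U * U = 1 := (Matrix.mem_unitaryGroup_iff').mp hP.eigenvectorUnitary.2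
  set D : Matrix n n ℂ := Matrix.diagonal (fun i => (hP.eigenvalues i : ℂ))
  conv_lhs => rw [spectral_c hP]
  have h1 : star U * (U * (D * star U)) = D * star U := by
    rw [← Matrix.mul_assoc, hUU, Matrix.one_mul]
  rw [← Matrix.diagonal_mul_diagonal]
  simp only [Matrix.mul_assoc]
  exact congrArg (U * ·) (congrArg (D * ·) h1)

lemma trace_herm_sq {P : Matrix n n ℂ} (hP : P.IsHermitian) :
    Matrix.trace (P * P) = ((∑ i, hP.eigenvalues i ^ 2 : ℝ) : ℂ) := by
  rw [conj_unitary_sq hP, trace_conj_unitary]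
  push_cast
  ring_nf

lemma trace_conjTranspose_mul_self (X : Matrix n n ℂ) :
    Matrix.trace (Xᴴ * X) = ((fro2 X : ℝ) : ℂ) := by
  rw [Matrix.trace, fro2]
  push_cast
  refine Finset.sum_congr rfl fun j _ => ?_
  rw [Matrix.diag_apply, Matrix.mul_apply]
  refine Finset.sum_congr rfl fun i _ => ?_
  rw [Matrix.conjTranspose_apply]
  rw [mul_comm]
  simp [Complex.star_def, Complex.mul_conj, Complex.normSq_eq_norm_sq]

lemma eig_abs_le {P : Matrix n n ℂ} (hP : P.IsHermitian) (i : n) :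
    |hP.eigenvalues i| ≤ ‖P‖ := by
  have hmv := hP.mulVec_eigenvectorBasis i
  have hb : ‖hP.eigenvectorBasis i‖ = 1 := hP.eigenvectorBasis.orthonormal.1 i
  have h1 := P.l2_opNorm_mulVec (hP.eigenvectorBasis i)
  erw [hmv] at h1
  have h2 : (EuclideanSpace.equiv n ℂ).symm (hP.eigenvalues i • ⇑(hP.eigenvectorBasis i))
      = hP.eigenvalues i • hP.eigenvectorBasis i := rfl
  rw [h2, norm_smul, hb, Real.norm_eq_abs, mul_one] at h1
  simpa [hb] using h1

lemma svals_nonneg {m : Type*} [Fintype m] (X : Matrix m n ℂ) (i : n) : 0 ≤ svals X i :=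
  Real.sqrt_nonneg _

lemma svals_eig {m : Type*} [Fintype m] (X : Matrix m n ℂ) (i : n) :
    svals X i ^ 2 = (Matrix.isHermitian_conjTranspose_mul_self X).eigenvalues i := by
  rw [svals, Real.sq_sqrt ((Matrix.posSemidef_conjTranspose_mul_self X).eigenvalues_nonneg i)]

lemma svals_le_norm {m : Type*} [Fintype m] [DecidableEq m] (X : Matrix m n ℂ) (i : n) :
    svals X i ≤ ‖X‖ := by
  have h1 := eig_abs_le (Matrix.isHermitian_conjTranspose_mul_self X) i
  rw [Matrix.l2_opNorm_conjTranspose_mul_self] at h1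
  have h2 : svals X i ^ 2 ≤ ‖X‖ * ‖X‖ :=
    (svals_eig X i).trans_le ((le_abs_self _).trans h1)
  nlinarith [svals_nonneg X i, norm_nonneg X]

lemma specNorm_nonneg' {m : Type*} [Fintype m] (X : Matrix m n ℂ) : 0 ≤ specNorm X :=
  Real.iSup_nonneg (svals_nonneg X)

lemma svals_le_specNorm {m : Type*} [Fintype m] (X : Matrix m n ℂ) (i : n) :
    svals X i ≤ specNorm X :=
  le_ciSup (Set.Finite.bddAbove (Set.finite_range _)) i

lemma norm_conj_unitary {U : Matrix n n ℂ} (hU : U ∈ Matrix.unitaryGroup n ℂ) (v : n → ℂ)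
    (c : ℝ) (hc : 0 ≤ c) (h : ∀ i, ‖v i‖ ≤ c) :
    ‖U * Matrix.diagonal v * star U‖ ≤ c := by
  have h1 : ‖U * Matrix.diagonal v * star U‖ ≤ ‖U * Matrix.diagonal v‖ * ‖star U‖ :=
    Matrix.l2_opNorm_mul _ _
  have h2 : ‖U * Matrix.diagonal v‖ ≤ ‖U‖ * ‖Matrix.diagonal v‖ := Matrix.l2_opNorm_mul _ _
  have h3 : ‖star U‖ = ‖U‖ := by
    rw [Matrix.star_eq_conjTranspose, Matrix.l2_opNorm_conjTranspose]
  have h4 := norm_unitary_le hU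
  have h5 := norm_diagonal_le v c hc h
  have n1 := norm_nonneg (U * Matrix.diagonal v)
  have n2 := norm_nonneg U
  have n3 := norm_nonneg (Matrix.diagonal v)
  nlinarith

lemma norm_le_specNorm (X : Matrix n n ℂ) : ‖X‖ ≤ specNorm X := by
  have hP : (Xᴴ * X).IsHermitian := Matrix.isHermitian_conjTranspose_mul_self X
  have hnorm : ‖Xᴴ * X‖ ≤ specNorm X ^ 2 := by
    rw [spectral_c hP]
    refine norm_conj_unitary hP.eigenvectorUnitary.2 _ _ (by positivity) fun i => ?_
    rw [Complex.norm_real, Real.norm_eq_abs, ← svals_eig X i, abs_of_nonneg (by positivity)]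
    have := svals_le_specNorm X i
    nlinarith [svals_nonneg X i]
  rw [Matrix.l2_opNorm_conjTranspose_mul_self] at hnorm
  nlinarith [norm_nonneg X, specNorm_nonneg' X]

open scoped MatrixOrder in
open Polynomial in
lemma key_decomp (A S : Matrix n n ℂ) (hA : A.IsHermitian) (hS : S.PosDef) :
    ∃ w : n → ℝ,
      (S⁻¹ * A).charpoly.roots = Finset.univ.val.map (fun i => 1 + ((w i : ℝ) : ℂ)) ∧
      ∑ i, w i ^ 2 ≤ specNorm S⁻¹ ^ 2 * fro2 (S - A) := by
  classical
  have hSu : IsUnit S.det := isUnit_iff_ne_zero.mpr hS.det_pos.ne'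
  have hK : (S⁻¹).PosDef := hS.inv
  set K : Matrix n n ℂ := S⁻¹ with hKdef
  set M : Matrix n n ℂ := CFC.sqrt K with hMdef
  have hMps : M.PosSemidef := Matrix.nonneg_iff_posSemidef.mp (CFC.sqrt_nonneg K)
  have hMH : Mᴴ = M := hMps.1
  have hMM : M * M = K := CFC.sqrt_mul_sqrt_self K (Matrix.nonneg_iff_posSemidef.mpr hK.posSemidef)
  have hMdet : IsUnit M.det := by
    refine isUnit_iff_ne_zero.mpr fun h => hK.det_pos.ne' ?_
    rw [← hMM, Matrix.det_mul, h, mul_zero]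
  have hMMinv : M * M⁻¹ = 1 := Matrix.mul_nonsing_inv M hMdet
  have hKS : K * S = 1 := Matrix.nonsing_inv_mul S hSu
  set B : Matrix n n ℂ := M * (A - S) * M with hBdef
  have hB : B.IsHermitian := by
    show Bᴴ = B
    rw [hBdef, Matrix.conjTranspose_mul, Matrix.conjTranspose_mul, hMH,
      Matrix.conjTranspose_sub, hA, hS.isHermitian, Matrix.mul_assoc]
  have hsim : K * A = M * (1 + B) * M⁻¹ := by
    have step1 : M * (1 + B) * M⁻¹ = M * M⁻¹ + M * (M * ((A - S) * (M * M⁻¹))) := by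
      rw [hBdef]
      simp only [Matrix.mul_add, Matrix.add_mul, Matrix.mul_one, Matrix.mul_assoc]
    rw [step1, hMMinv, Matrix.mul_one, ← Matrix.mul_assoc, hMM, Matrix.mul_sub, hKS]
    rw [add_sub_cancel]
  set w : n → ℝ := hB.eigenvalues with hwdef
  set U : Matrix n n ℂ := (hB.eigenvectorUnitary : Matrix n n ℂ) with hUdef
  have hUU' : U * star U = 1 := Matrix.mem_unitaryGroup_iff.mp hB.eigenvectorUnitary.2
  have hUdet : IsUnit U.det := by
    refine IsUnit.of_mul_eq_one (star U).det ?_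
    rw [← Matrix.det_mul, hUU', Matrix.det_one]
  have hUinv : U⁻¹ = star U := Matrix.inv_eq_right_inv hUU'
  have h1B : 1 + B = U * Matrix.diagonal (fun i => 1 + ((w i : ℝ) : ℂ)) * U⁻¹ := by
    rw [hUinv]
    rw [show Matrix.diagonal (fun i => 1 + ((w i : ℝ) : ℂ))
        = 1 + Matrix.diagonal (fun i => ((w i : ℝ) : ℂ)) from by
      rw [← Matrix.diagonal_one, Matrix.diagonal_add]]
    rw [Matrix.mul_add, Matrix.add_mul, Matrix.mul_one, hUU', ← spectral_c hB]
  have hroots : (S⁻¹ * A).charpoly.roots = Finset.univ.val.map (fun i => 1 + ((w i : ℝ) : ℂ)) := by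
    rw [← hKdef, hsim, charpoly_conj' M (1 + B) hMdet, h1B,
      charpoly_conj' U _ hUdet, charpoly_diag']
    rw [Finset.prod_eq_multiset_prod]
    have hcomp : (fun i : n => X - C (1 + ((w i : ℝ) : ℂ)))
        = (fun a : ℂ => X - C a) ∘ (fun i : n => 1 + ((w i : ℝ) : ℂ)) := rfl
    rw [hcomp, ← Multiset.map_map, roots_multiset_prod_X_sub_C]
  refine ⟨w, hroots, ?_⟩
  have hsum : ∑ i, w i ^ 2 = fro2 B := by
    have h1 := trace_herm_sq hB
    have h2 := trace_conjTranspose_mul_self B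
    rw [hB] at h2
    rw [← hwdef] at h1
    exact_mod_cast h1.symm.trans h2
  have hfro : fro2 B ≤ ‖M‖ ^ 2 * fro2 (A - S) * ‖M‖ ^ 2 := by
    calc fro2 B ≤ fro2 (M * (A - S)) * ‖M‖ ^ 2 := fro2_mul_right_le _ _
      _ ≤ ‖M‖ ^ 2 * fro2 (A - S) * ‖M‖ ^ 2 := by
          exact mul_le_mul_of_nonneg_right (fro2_mul_le M (A - S)) (sq_nonneg _)
  have hMK : ‖M‖ * ‖M‖ = ‖K‖ := by
    have := Matrix.l2_opNorm_conjTranspose_mul_self M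
    rw [hMH, hMM] at this
    exact this.symm
  have hKspec : ‖K‖ ≤ specNorm K := norm_le_specNorm K
  have hAS : fro2 (A - S) = fro2 (S - A) := by rw [← fro2_neg (S - A), neg_sub]
  have hM0 := norm_nonneg M
  have hK0 := norm_nonneg K
  have hf0 := fro2_nonneg (S - A)
  rw [hsum]
  calc fro2 B ≤ ‖M‖ ^ 2 * fro2 (S - A) * ‖M‖ ^ 2 := by rw [← hAS]; exact hfro
    _ = (‖M‖ * ‖M‖) ^ 2 * fro2 (S - A) := by ring
    _ = ‖K‖ ^ 2 * fro2 (S - A) := by rw [hMK]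
    _ ≤ specNorm K ^ 2 * fro2 (S - A) :=
        mul_le_mul_of_nonneg_right (pow_le_pow_left₀ hK0 hKspec 2) hf0

lemma fro2_eq_sum_svals (X : Matrix n n ℂ) : fro2 X = ∑ i, svals X i ^ 2 := by
  have h1 := trace_herm (Matrix.isHermitian_conjTranspose_mul_self X)
  have h2 := trace_conjTranspose_mul_self X
  have h3 : ∑ i, svals X i ^ 2
      = ∑ i, (Matrix.isHermitian_conjTranspose_mul_self X).eigenvalues i :=
    Finset.sum_congr rfl fun i _ => svals_eig X i
  have h4 : ((∑ i, (Matrix.isHermitian_conjTranspose_mul_self X).eigenvalues i : ℝ) : ℂ)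
      = ((fro2 X : ℝ) : ℂ) := h1.symm.trans h2
  rw [h3]
  exact_mod_cast h4.symm

lemma sum_svalFun {p : ℕ} (X : Matrix (Fin p) (Fin p) ℂ) (F : ℝ → ℂ) :
    ∑ j ∈ Finset.range p, F (svalFun X j) = ∑ i, F (svals X i) := by
  rw [← Fin.sum_univ_eq_sum_range (fun j => F (svalFun X j)) p]
  calc ∑ i : Fin p, F (svalFun X (i : ℕ))
      = ∑ i : Fin p, F (svals X ((Fin.revPerm.trans (Tuple.sort (svals X))) i)) := by
        refine Finset.sum_congr rfl fun i _ => ?_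
        rw [show svalFun X (i : ℕ) = svals X ((Fin.revPerm.trans (Tuple.sort (svals X))) i) from by
          rw [svalFun, dif_pos i.isLt]; rfl]
    _ = ∑ i, F (svals X i) :=
        Equiv.sum_comp (Fin.revPerm.trans (Tuple.sort (svals X))) (fun k => F (svals X k))

end Aux

open scoped Matrix.Norms.L2Operator in
/-- for Hermitian `{Aₙ}` and Hermitian positive definite `{Sₙ}`
with uniformly bounded `‖Aₙ‖, ‖Sₙ‖, ‖Sₙ⁻¹‖` and `{Sₙ - Aₙ}ₙ` zero-distributed,
the eigenvalues of `Sₙ⁻¹Aₙ` (the roots of its characteristic polynomial,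
with multiplicity) are real and weakly clustered at `1`. -/
theorem precond_eigenvalues_cluster_one (d : ℕ → ℕ)
    (hd : Tendsto d atTop atTop)
    (A S : (n : ℕ) → Matrix (Fin (d n)) (Fin (d n)) ℂ)
    (hA : ∀ n, (A n).IsHermitian) (hS : ∀ n, (S n).PosDef)
    (hzd : ∀ F : ℝ → ℂ, Continuous F → HasCompactSupport F →
      Tendsto (fun n => (1 / (d n : ℝ)) •
          ∑ j ∈ Finset.range (d n), F (svalFun (S n - A n) j))
        atTop (nhds (F 0)))
    (hSinv : ∃ C : ℝ, ∀ n, specNorm ((S n)⁻¹) ≤ C)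
    (hAb : ∃ C : ℝ, ∀ n, specNorm (A n) ≤ C)
    (hSb : ∃ C : ℝ, ∀ n, specNorm (S n) ≤ C) :
    (∀ n, ∀ μ ∈ ((S n)⁻¹ * A n).charpoly.roots, μ.im = 0) ∧
    (∀ ε : ℝ, 0 < ε →
      Tendsto (fun n =>
          (((((S n)⁻¹ * A n).charpoly.roots.filter
              (fun μ => ε < ‖μ - 1‖)).card : ℝ)) / d n)
        atTop (nhds 0)) := by
  classical
  obtain ⟨Ci, hCi⟩ := hSinv
  obtain ⟨Ca, hCa⟩ := hAb
  obtain ⟨Cs, hCs⟩ := hSb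
  choose w hw1 hw2 using fun n => key_decomp (A n) (S n) (hA n) (hS n)
  constructor
  · intro n μ hμ
    rw [hw1 n] at hμ
    obtain ⟨i, _, rfl⟩ := Multiset.mem_map.mp hμ
    simp
  · intro ε hε
    set c : ℝ := max (Cs + Ca) 1 with hc
    have hc1 : (1 : ℝ) ≤ c := le_max_right _ _
    have hc0 : (0 : ℝ) < c := lt_of_lt_of_le one_pos hc1
    have hsval_bound : ∀ n i, svals (S n - A n) i ≤ c := by
      intro n i
      have h1 : svals (S n - A n) i ≤ ‖S n - A n‖ := svals_le_norm _ _
      have h2 : ‖S n - A n‖ ≤ ‖S n‖ + ‖A n‖ := norm_sub_le _ _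
      have h3 : ‖S n‖ ≤ Cs := (norm_le_specNorm _).trans (hCs n)
      have h4 : ‖A n‖ ≤ Ca := (norm_le_specNorm _).trans (hCa n)
      have h5 : Cs + Ca ≤ c := le_max_left _ _
      linarith
    set φ : ℝ → ℝ := fun x => max 0 (min (x ^ 2) (2 * c ^ 2 - x ^ 2)) with hφdef
    have hφcont : Continuous fun x : ℝ => ((φ x : ℝ) : ℂ) := by
      refine Complex.continuous_ofReal.comp ?_
      exact continuous_const.max ((continuous_pow 2).min (by continuity))
    have hφsupp : HasCompactSupport fun x : ℝ => ((φ x : ℝ) : ℂ) := by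
      refine HasCompactSupport.intro (isCompact_Icc (a := -(2 * c)) (b := 2 * c)) ?_
      intro x hx
      rw [Set.mem_Icc, not_and_or] at hx
      have hxx : 2 * c ^ 2 - x ^ 2 ≤ 0 := by
        rcases hx with h | h
        · push_neg at h; nlinarith
        · push_neg at h; nlinarith
      have : min (x ^ 2) (2 * c ^ 2 - x ^ 2) ≤ 0 := le_trans (min_le_right _ _) hxx
      simp only [hφdef, Complex.ofReal_eq_zero]
      exact max_eq_left this
    have hφsq : ∀ x : ℝ, 0 ≤ x → x ≤ c → φ x = x ^ 2 := by
      intro x h0 h1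
      have hmin : min (x ^ 2) (2 * c ^ 2 - x ^ 2) = x ^ 2 := min_eq_left (by nlinarith)
      simp only [hφdef]
      rw [hmin]
      exact max_eq_right (sq_nonneg x)
    have hφ0 : φ 0 = 0 := by
      rw [hφsq 0 le_rfl hc0.le]
      norm_num
    have hlim := hzd (fun x => ((φ x : ℝ) : ℂ)) hφcont hφsupp
    simp only [hφ0, Complex.ofReal_zero] at hlim
    have hsum : ∀ n, ((1 / (d n : ℝ)) •
        ∑ j ∈ Finset.range (d n), ((φ (svalFun (S n - A n) j) : ℝ) : ℂ))
        = (((fro2 (S n - A n) / (d n : ℝ) : ℝ)) : ℂ) := by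
      intro n
      rw [sum_svalFun (S n - A n) (fun x => ((φ x : ℝ) : ℂ))]
      have h6 : ∑ i, ((φ (svals (S n - A n) i) : ℝ) : ℂ)
          = ((∑ i, svals (S n - A n) i ^ 2 : ℝ) : ℂ) := by
        push_cast
        refine Finset.sum_congr rfl fun i _ => ?_
        rw [hφsq _ (svals_nonneg _ _) (hsval_bound n i)]
        push_cast
        ring
      rw [h6, ← fro2_eq_sum_svals]
      rw [Complex.real_smul]
      push_cast
      ring
    have hlim2 : Filter.Tendsto (fun n => (((fro2 (S n - A n) / (d n : ℝ) : ℝ)) : ℂ))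
        Filter.atTop (nhds 0) := by
      exact Filter.Tendsto.congr (fun n => hsum n) hlim
    have hfro_lim : Filter.Tendsto (fun n => fro2 (S n - A n) / (d n : ℝ))
        Filter.atTop (nhds 0) := by
      have h9 := (Complex.continuous_re.tendsto (0 : ℂ)).comp hlim2
      have h10 : Filter.Tendsto (fun n => fro2 (S n - A n) / (d n : ℝ))
          Filter.atTop (nhds (Complex.re 0)) := h9.congr fun n => Complex.ofReal_re _
      simpa using h10
    have hcount : ∀ n,
        (((((S n)⁻¹ * A n).charpoly.roots.filter
            (fun μ => ε < ‖μ - 1‖)).card : ℝ))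
          ≤ Ci ^ 2 / ε ^ 2 * fro2 (S n - A n) := by
      intro n
      have e1 : (((S n)⁻¹ * A n).charpoly.roots.filter (fun μ => ε < ‖μ - 1‖))
          = Multiset.map (fun i => 1 + ((w n i : ℝ) : ℂ))
              (Finset.univ.val.filter
                (fun i => ε < ‖(1 + ((w n i : ℝ) : ℂ)) - 1‖)) := by
        rw [hw1 n, Multiset.filter_map]
        rfl
      have e2 : (((S n)⁻¹ * A n).charpoly.roots.filter
            (fun μ => ε < ‖μ - 1‖)).card
          = (Finset.univ.filter (fun i => ε < |w n i|)).card := by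
        rw [e1, Multiset.card_map]
        congr 1
        rw [Finset.filter_val]
        congr 1
        funext i
        simp [add_sub_cancel_left]
      rw [e2]
      set T := Finset.univ.filter (fun i => ε < |w n i|) with hT
      have hTsum : (T.card : ℝ) * ε ^ 2 ≤ ∑ i ∈ T, w n i ^ 2 := by
        calc (T.card : ℝ) * ε ^ 2 = ∑ _i ∈ T, ε ^ 2 := by rw [Finset.sum_const, nsmul_eq_mul]
          _ ≤ ∑ i ∈ T, w n i ^ 2 := by
              refine Finset.sum_le_sum fun i hi => ?_
              have hi' : ε < |w n i| := by simpa [hT] using (Finset.mem_filter.mp hi).2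
              have h8 : ε ^ 2 < |w n i| ^ 2 := pow_lt_pow_left₀ hi' hε.le (by norm_num)
              rw [sq_abs] at h8
              exact h8.le
      have hTle : ∑ i ∈ T, w n i ^ 2 ≤ ∑ i, w n i ^ 2 :=
        Finset.sum_le_sum_of_subset_of_nonneg (Finset.subset_univ T)
          (fun i _ _ => sq_nonneg _)
      have hCi2 : specNorm (S n)⁻¹ ^ 2 ≤ Ci ^ 2 :=
        pow_le_pow_left₀ (specNorm_nonneg' _) (hCi n) 2
      have htot : (T.card : ℝ) * ε ^ 2 ≤ Ci ^ 2 * fro2 (S n - A n) := by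
        have := hw2 n
        have h7 : specNorm (S n)⁻¹ ^ 2 * fro2 (S n - A n) ≤ Ci ^ 2 * fro2 (S n - A n) :=
          mul_le_mul_of_nonneg_right hCi2 (fro2_nonneg _)
        linarith
      have hε2 : (0 : ℝ) < ε ^ 2 := pow_pos hε 2
      have := (le_div_iff₀ hε2).mpr htot
      calc (T.card : ℝ) ≤ Ci ^ 2 * fro2 (S n - A n) / ε ^ 2 := this
        _ = Ci ^ 2 / ε ^ 2 * fro2 (S n - A n) := by ring
    refine squeeze_zero (g := fun n => Ci ^ 2 / ε ^ 2 * (fro2 (S n - A n) / (d n : ℝ)))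
      (fun n => by positivity) (fun n => ?_) ?_
    · show _ / (d n : ℝ) ≤ Ci ^ 2 / ε ^ 2 * (fro2 (S n - A n) / (d n : ℝ))
      rcases eq_or_lt_of_le (Nat.cast_nonneg (d n) : (0:ℝ) ≤ d n) with hd | hd
      · rw [← hd, div_zero, div_zero, mul_zero]
      · rw [← mul_div_assoc]
        exact (div_le_div_iff_of_pos_right hd).mpr (hcount n)
    · have := hfro_lim.const_mul (Ci ^ 2 / ε ^ 2)
      simpa using this
end
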